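/- For every positive integer r, the 2-colour list Ramsey number of the star equals the 2-colour Ramsey number: R_ℓ(K_{1,r}, 2) = R(K_{1,r}, 2), and this common value equals 2r - 1 if r is even and 2r if r is odd. -/

import Mathlib

/-- The star `K_{1,r}` with centre `0` and `r` leaves. -/
def starGraph (r : ℕ) : SimpleGraph (Fin (r + 1)) :=
  SimpleGraph.fromRel (fun a _ => a = 0)

/-- A colouring `c` of the edges of the complete graph on `Fin n` contains a
monochromatic copy of the graph `G`. -/
def HasMonoCopy {α β : Type*} (G : SimpleGraph α) {n : ℕ} (c : Sym2 (Fin n) → β) : Prop :=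
  ∃ (f : α → Fin n) (x : β), Function.Injective f ∧
    ∀ a b, G.Adj a b → c s(f a, f b) = x

/-- The `k`-colour list Ramsey number of a graph `G`: the least `n` for which one can
assign a list of `k` colours to each edge of `K_n` so that every colouring of the edges
from these lists contains a monochromatic copy of `G`. -/
noncomputable def listRamsey {α : Type*} (G : SimpleGraph α) (k : ℕ) : ℕ :=
  sInf { n : ℕ | ∃ L : Sym2 (Fin n) → Finset ℕ,
    (∀ e : Sym2 (Fin n), ¬ e.IsDiag → (L e).card = k) ∧
    ∀ c : Sym2 (Fin n) → ℕ, (∀ e : Sym2 (Fin n), ¬ e.IsDiag → c e ∈ L e) →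
      HasMonoCopy G c }

/-- The ordinary `k`-colour Ramsey number of a graph `G`: the least `n` such that every
`k`-colouring of the edges of `K_n` contains a monochromatic copy of `G`. -/
noncomputable def ramsey {α : Type*} (G : SimpleGraph α) (k : ℕ) : ℕ :=
  sInf { n : ℕ | ∀ c : Sym2 (Fin n) → Fin k, HasMonoCopy G c }

open Finset

lemma starGraph_adj {r : ℕ} {a b : Fin (r+1)} :
    (starGraph r).Adj a b ↔ a ≠ b ∧ (a = 0 ∨ b = 0) := by
  simp [starGraph, SimpleGraph.fromRel_adj]

lemma mono_of_degree {β : Type*} [DecidableEq β] {r n : ℕ} {c : Sym2 (Fin n) → β} {v : Fin n} {x : β}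
    (h : r ≤ (univ.filter (fun u => u ≠ v ∧ c s(v, u) = x)).card) :
    HasMonoCopy (starGraph r) c := by
  classical
  obtain ⟨W, hWsub, hWcard⟩ := Finset.exists_subset_card_eq h
  let ε := W.orderIsoOfFin hWcard
  have hW : ∀ u ∈ W, u ≠ v ∧ c s(v, u) = x := by
    intro u hu
    have := hWsub hu
    simpa using this
  refine ⟨fun a => if h : a = 0 then v else (ε (a.pred h) : Fin n), x, ?_, ?_⟩
  · intro a b hab
    simp only at hab
    by_cases ha : a = 0 <;> by_cases hb : b = 0
    · simp [ha, hb]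
    · rw [dif_pos ha, dif_neg hb] at hab
      exact absurd hab.symm (hW _ (ε (b.pred hb)).2).1
    · rw [dif_neg ha, dif_pos hb] at hab
      exact absurd hab (hW _ (ε (a.pred ha)).2).1
    · rw [dif_neg ha, dif_neg hb] at hab
      have h1 : a.pred ha = b.pred hb := ε.injective (Subtype.ext hab)
      have h2 := congrArg Fin.succ h1
      simpa [Fin.succ_pred] using h2
  · intro a b hadj
    rw [starGraph_adj] at hadj
    obtain ⟨hne, h0⟩ := hadj
    simp only
    rcases h0 with h0 | h0
    · subst h0
      have hb : b ≠ 0 := fun hb => hne hb.symm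
      rw [dif_pos rfl, dif_neg hb]
      exact (hW _ (ε (b.pred hb)).2).2
    · subst h0
      have ha : a ≠ 0 := hne
      rw [dif_neg ha, dif_pos rfl, Sym2.eq_swap]
      exact (hW _ (ε (a.pred ha)).2).2

lemma degree_of_mono {β : Type*} [DecidableEq β] {r n : ℕ} {c : Sym2 (Fin n) → β}
    (h : HasMonoCopy (starGraph r) c) :
    ∃ (v : Fin n) (x : β), r ≤ (univ.filter (fun u => u ≠ v ∧ c s(v, u) = x)).card := by
  obtain ⟨f, x, hinj, hmono⟩ := h
  refine ⟨f 0, x, ?_⟩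
  have hmem : ∀ i : Fin r, f i.succ ∈ univ.filter (fun u => u ≠ f 0 ∧ c s(f 0, u) = x) := by
    intro i
    simp only [mem_filter, mem_univ, true_and]
    refine ⟨fun h => (Fin.succ_ne_zero i) (hinj h), ?_⟩
    exact hmono 0 i.succ (starGraph_adj.mpr ⟨(Fin.succ_ne_zero i).symm, Or.inl rfl⟩)
  calc r = (univ : Finset (Fin r)).card := by simp
  _ ≤ _ := by
      apply Finset.card_le_card_of_injOn (fun i => f i.succ) (fun i _ => hmem i)
      intro i _ j _ hij
      exact Fin.succ_injective _ (hinj hij)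

lemma star_forced {r : ℕ} (hr : 0 < r) {β : Type*} [DecidableEq β]
    {n : ℕ} (hn : n = if Even r then 2*r - 1 else 2*r)
    (c : Sym2 (Fin n) → β) (x y : β)
    (hc : ∀ e : Sym2 (Fin n), ¬ e.IsDiag → c e = x ∨ c e = y) :
    HasMonoCopy (starGraph r) c := by
  classical
  by_contra hmono
  have hbd : ∀ (v : Fin n) (z : β), (univ.filter (fun u => u ≠ v ∧ c s(v, u) = z)).card ≤ r - 1 := by
    intro v z
    by_contra hle
    exact hmono (mono_of_degree (v := v) (x := z) (by omega))
  have hnpos : 0 < n := by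
    rcases Nat.even_or_odd r with he | ho
    · have : r ≠ 1 := by rintro rfl; simp at he
      simp [hn, if_pos he]; omega
    · simp [hn, if_neg (Nat.not_even_iff_odd.mpr ho)]; omega
  have hsplit : ∀ v : Fin n,
      n - 1 ≤ (univ.filter (fun u => u ≠ v ∧ c s(v, u) = x)).card
        + (univ.filter (fun u => u ≠ v ∧ c s(v, u) = y)).card := by
    intro v
    have hsub : univ.filter (fun u => u ≠ v) ⊆
        (univ.filter (fun u => u ≠ v ∧ c s(v, u) = x)) ∪ (univ.filter (fun u => u ≠ v ∧ c s(v, u) = y)) := by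
      intro u hu
      simp only [mem_filter, mem_univ, true_and] at hu
      have hnd : ¬ (s(v, u) : Sym2 (Fin n)).IsDiag := by
        rw [Sym2.mk_isDiag_iff]; exact fun h => hu h.symm
      rcases hc _ hnd with h | h
      · exact Finset.mem_union_left _ (by simp [hu, h])
      · exact Finset.mem_union_right _ (by simp [hu, h])
    have hcne : (univ.filter (fun u => u ≠ v)).card = n - 1 := by
      rw [Finset.filter_ne' univ v, Finset.card_erase_of_mem (mem_univ v)]
      simp
    calc n - 1 = (univ.filter (fun u => u ≠ v)).card := hcne.symm
    _ ≤ _ := (Finset.card_le_card hsub).trans (Finset.card_union_le _ _)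
  rcases Nat.even_or_odd r with he | ho
  · -- r even, n = 2r - 1
    have hr2 : 2 ≤ r := by
      rcases he with ⟨s, rfl⟩; omega
    have hn' : n = 2*r - 1 := by simp [hn, if_pos he]
    by_cases hxy : x = y
    · subst hxy
      set v : Fin n := ⟨0, hnpos⟩
      have hsub : univ.filter (fun u => u ≠ v) ⊆ univ.filter (fun u => u ≠ v ∧ c s(v, u) = x) := by
        intro u hu
        simp only [mem_filter, mem_univ, true_and] at hu ⊢
        have hnd : ¬ (s(v, u) : Sym2 (Fin n)).IsDiag := by
          rw [Sym2.mk_isDiag_iff]; exact fun h => hu h.symm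
        rcases hc _ hnd with h | h <;> exact ⟨hu, h⟩
      have hcne : (univ.filter (fun u => u ≠ v)).card = n - 1 := by
        rw [Finset.filter_ne' univ v, Finset.card_erase_of_mem (mem_univ v)]
        simp
      have hc1 := Finset.card_le_card hsub
      have hc2 := hbd v x
      omega
    -- x ≠ y : every vertex has exactly r - 1 x-neighbours
    have hdeg : ∀ v : Fin n, (univ.filter (fun u => u ≠ v ∧ c s(v, u) = x)).card = r - 1 := by
      intro v
      have h1 := hsplit v
      have h2 := hbd v x
      have h3 := hbd v y
      omega
    set G : SimpleGraph (Fin n) :=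
      { Adj := fun u w => u ≠ w ∧ c s(u, w) = x
        symm := by
          constructor
          intro u w hw
          exact ⟨hw.1.symm, by rw [Sym2.eq_swap]; exact hw.2⟩
        loopless := ⟨fun u h => h.1 rfl⟩ } with hG
    letI : DecidableRel G.Adj := fun u w => inferInstanceAs (Decidable (u ≠ w ∧ c s(u, w) = x))
    have hGdeg : ∀ v : Fin n, G.degree v = r - 1 := by
      intro v
      rw [← hdeg v]
      rw [SimpleGraph.degree, SimpleGraph.neighborFinset_eq_filter]
      congr 1
      ext u
      simp only [mem_filter, mem_univ, true_and, hG]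
      constructor
      · rintro ⟨h1, h2⟩; exact ⟨h1.symm, h2⟩
      · rintro ⟨h1, h2⟩; exact ⟨h1.symm, h2⟩
    have hsum := SimpleGraph.sum_degrees_eq_twice_card_edges G
    rw [Finset.sum_congr rfl (fun v _ => hGdeg v)] at hsum
    rw [Finset.sum_const, card_univ, Fintype.card_fin, smul_eq_mul] at hsum
    -- n * (r-1) = 2 * #edges, but n and r-1 are odd
    obtain ⟨s, hs⟩ := he
    have hodd : Odd (n * (r - 1)) := by
      refine Odd.mul ⟨(n-1)/2, by omega⟩ ⟨(r-2)/2, by omega⟩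
    rw [hsum] at hodd
    exact (Nat.not_odd_iff_even.mpr ⟨_, by ring⟩) hodd
  · -- r odd, n = 2r
    have hn' : n = 2*r := by simp [hn, if_neg (Nat.not_even_iff_odd.mpr ho)]
    have h1 := hsplit ⟨0, hnpos⟩
    have h2 := hbd ⟨0, hnpos⟩ x
    have h3 := hbd ⟨0, hnpos⟩ y
    omega

def LSet {α : Type*} (G : SimpleGraph α) (k : ℕ) : Set ℕ :=
  { n : ℕ | ∃ L : Sym2 (Fin n) → Finset ℕ,
    (∀ e : Sym2 (Fin n), ¬ e.IsDiag → (L e).card = k) ∧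
    ∀ c : Sym2 (Fin n) → ℕ, (∀ e : Sym2 (Fin n), ¬ e.IsDiag → c e ∈ L e) →
      HasMonoCopy G c }

def RSet {α : Type*} (G : SimpleGraph α) (k : ℕ) : Set ℕ :=
  { n : ℕ | ∀ c : Sym2 (Fin n) → Fin k, HasMonoCopy G c }

lemma sym2_map_isDiag {n m : ℕ} (f : Fin n → Fin m) (hf : Function.Injective f)
    (e : Sym2 (Fin n)) : (Sym2.map f e).IsDiag ↔ e.IsDiag := by
  induction e using Sym2.inductionOn with
  | hf a b => simp only [Sym2.map_pair_eq, Sym2.mk_isDiag_iff]; exact ⟨fun h => hf h, fun h => h ▸ rfl⟩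

lemma LSet_mono {α : Type*} (G : SimpleGraph α) (k : ℕ) {m m' : ℕ}
    (hm : m ∈ LSet G k) (h : m ≤ m') : m' ∈ LSet G k := by
  classical
  obtain ⟨L, hLcard, hLforce⟩ := hm
  set emb : Fin m ↪ Fin m' := Fin.castLEEmb h with hembdef
  refine ⟨fun e => if he : ∃ e₀ : Sym2 (Fin m), Sym2.map emb e₀ = e then L he.choose
    else Finset.range k, ?_, ?_⟩
  · intro e hend
    simp only
    by_cases he : ∃ e₀ : Sym2 (Fin m), Sym2.map emb e₀ = e
    · rw [dif_pos he]
      apply hLcard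
      intro hd
      apply hend
      rw [← he.choose_spec]
      rw [sym2_map_isDiag emb emb.injective]
      exact hd
    · rw [dif_neg he]; simp
  · intro c hcm
    have hforce := hLforce (fun e₀ => c (Sym2.map emb e₀)) ?_
    · obtain ⟨f, x, hinj, hmono⟩ := hforce
      refine ⟨fun a => emb (f a), x, emb.injective.comp hinj, ?_⟩
      intro a b hadj
      have := hmono a b hadj
      simp only at this ⊢
      rwa [Sym2.map_pair_eq] at this
    · intro e₀ hd
      have hnd : ¬ (Sym2.map emb e₀).IsDiag := by
        rw [sym2_map_isDiag emb emb.injective]; exact hd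
      have := hcm _ hnd
      have hex : ∃ e₁ : Sym2 (Fin m), Sym2.map emb e₁ = Sym2.map emb e₀ := ⟨e₀, rfl⟩
      simp only at this ⊢
      rw [dif_pos hex] at this
      have heq : hex.choose = e₀ := Sym2.map.injective emb.injective hex.choose_spec
      rwa [heq] at this
      
lemma RSet_subset_LSet {α : Type*} (G : SimpleGraph α) {k : ℕ} (hk : 0 < k) {m : ℕ}
    (hm : m ∈ RSet G k) : m ∈ LSet G k := by
  classical
  refine ⟨fun _ => Finset.range k, fun e _ => by simp, ?_⟩
  intro c hc
  obtain ⟨f, x, hinj, hmono⟩ := hm (fun e => ⟨c e % k, Nat.mod_lt _ hk⟩)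
  refine ⟨f, x.val, hinj, ?_⟩
  intro a b hadj
  have hab : f a ≠ f b := fun hfe => (G.ne_of_adj hadj) (hinj hfe)
  have hnd : ¬ (s(f a, f b) : Sym2 (Fin m)).IsDiag := by rw [Sym2.mk_isDiag_iff]; exact hab
  have hlt : c s(f a, f b) < k := by simpa using hc _ hnd
  have := hmono a b hadj
  have hval := congrArg Fin.val this
  simpa [Nat.mod_eq_of_lt hlt] using hval


open Finset

lemma mod_idem (a T : ℕ) : a % T % T = a % T := Nat.mod_mod_of_dvd a dvd_rfl

lemma key1 {s t T : ℕ} (hs : s < T) (ht : t < T) : (s + (t + T - s) % T) % T = t := by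
  have h1 : (s + (t + T - s) % T) % T = (s % T + (t + T - s) % T % T) % T := Nat.add_mod _ _ _
  rw [mod_idem] at h1
  rw [h1, ← Nat.add_mod]
  have : s + (t + T - s) = t + T := by omega
  rw [this, Nat.add_mod_right, Nat.mod_eq_of_lt ht]

lemma key2 {s t T : ℕ} (hs : s < T) (ht : t < T) :
    ((t + 1) % T + T - s) % T = ((t + T - s) % T + 1) % T := by
  have e1 : (t + 1) % T + T - s = (t + 1) % T + (T - s) := by omega
  rw [e1]
  have h1 : ((t + 1) % T + (T - s)) % T = ((t + 1) % T % T + (T - s) % T) % T := Nat.add_mod _ _ _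
  rw [mod_idem, ← Nat.add_mod] at h1
  have h2 : ((t + T - s) % T + 1) % T = ((t + T - s) % T % T + 1 % T) % T := Nat.add_mod _ _ _
  rw [mod_idem, ← Nat.add_mod] at h2
  rw [h1, h2]
  congr 1
  omega

lemma key3 {t₀ T : ℕ} (ht₀ : t₀ < T) : ((t₀ + 1) % T + (T - 1)) % T = t₀ := by
  have h1 : ((t₀ + 1) % T + (T - 1)) % T = ((t₀ + 1) % T % T + (T - 1) % T) % T := Nat.add_mod _ _ _
  rw [mod_idem, ← Nat.add_mod] at h1
  rw [h1]
  have : t₀ + 1 + (T - 1) = t₀ + T := by omega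
  rw [this, Nat.add_mod_right, Nat.mod_eq_of_lt ht₀]

lemma sdiff_single_nonempty {A : Finset ℕ} (hA : A.card = 2) (p : ℕ) : (A \ {p}).Nonempty := by
  obtain ⟨a, b, hab, rfl⟩ := Finset.card_eq_two.mp hA
  by_cases hpa : p = a
  · refine ⟨b, Finset.mem_sdiff.mpr ⟨by simp, ?_⟩⟩
    subst hpa
    simp only [Finset.mem_singleton]
    exact fun h => hab h.symm
  · refine ⟨a, Finset.mem_sdiff.mpr ⟨by simp, ?_⟩⟩
    simp only [Finset.mem_singleton]
    exact fun h => hpa h.symm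

lemma cyclic_list_coloring (T : ℕ) (ℓ : ℕ → Finset ℕ)
    (hcard : ∀ t < T, (ℓ t).card = 2)
    (hbr : Even T ∨ ∃ t₀, t₀ < T ∧ ℓ t₀ ≠ ℓ ((t₀ + 1) % T)) :
    ∃ g : ℕ → ℕ, (∀ t < T, g t ∈ ℓ t) ∧ (∀ t < T, g t ≠ g ((t + 1) % T)) := by
  classical
  rcases Nat.eq_zero_or_pos T with rfl | hT
  · exact ⟨fun _ => 0, by omega, by omega⟩
  by_cases hB : ∃ t₀, t₀ < T ∧ ℓ t₀ ≠ ℓ ((t₀ + 1) % T)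
  · obtain ⟨t₀, ht₀, hne⟩ := hB
    set s := (t₀ + 1) % T with hsdef
    have hs : s < T := Nat.mod_lt _ hT
    have hpick0 : (ℓ s \ ℓ t₀).Nonempty := by
      rw [Finset.sdiff_nonempty]
      intro hsub
      exact hne (Finset.eq_of_subset_of_card_le hsub (by rw [hcard _ hs, hcard _ ht₀]) ).symm
    set F : ℕ → ℕ → ℕ := fun j prev =>
      if h : ((ℓ ((s + j + 1) % T)) \ {prev}).Nonempty then h.choose else 0 with hF
    set h : ℕ → ℕ := fun j => Nat.rec hpick0.choose (fun j prev => F j prev) j with hh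
    have hstep : ∀ j, h (j + 1) ∈ ℓ ((s + j + 1) % T) ∧ h (j + 1) ≠ h j := by
      intro j
      have hne' : ((ℓ ((s + j + 1) % T)) \ {h j}).Nonempty :=
        sdiff_single_nonempty (hcard _ (Nat.mod_lt _ hT)) _
      have : h (j + 1) = F j (h j) := rfl
      rw [this, hF]
      simp only [dif_pos hne']
      have := hne'.choose_spec
      rw [Finset.mem_sdiff] at this
      exact ⟨this.1, by simpa using this.2⟩
    have hmem : ∀ j, h j ∈ ℓ ((s + j) % T) := by
      intro j
      cases j with
      | zero =>
        have := hpick0.choose_spec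
        rw [Finset.mem_sdiff] at this
        show hpick0.choose ∈ ℓ ((s + 0) % T)
        simpa [Nat.mod_eq_of_lt hs] using this.1
      | succ j => exact (hstep j).1
    refine ⟨fun t => h ((t + T - s) % T), ?_, ?_⟩
    · intro t ht
      have := hmem ((t + T - s) % T)
      rwa [key1 hs ht] at this
    · intro t ht
      simp only
      have hj : ((t + 1) % T + T - s) % T = ((t + T - s) % T + 1) % T := key2 hs ht
      rw [hj]
      have hjlt : (t + T - s) % T < T := Nat.mod_lt _ hT
      by_cases hjT : (t + T - s) % T + 1 < T
      · rw [Nat.mod_eq_of_lt hjT]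
        exact Ne.symm (hstep _).2
      · have hjeq : (t + T - s) % T = T - 1 := by omega
        have h0 : ((t + T - s) % T + 1) % T = 0 := by
          rw [hjeq]
          have e : T - 1 + 1 = T := by omega
          rw [e, Nat.mod_self]
        rw [h0]
        have ht' : t = t₀ := by
          have hk := key1 hs ht
          rw [hjeq] at hk
          have hk3 := key3 ht₀
          rw [← hsdef] at hk3
          rw [hk] at hk3
          exact hk3
        subst ht'
        have hmemj : h ((t + T - s) % T) ∈ ℓ t := by
          have h1 := hmem ((t + T - s) % T)
          rwa [key1 hs ht] at h1
        have hnot : h 0 ∉ ℓ t := (Finset.mem_sdiff.mp hpick0.choose_spec).2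
        intro hcontra
        rw [hcontra] at hmemj
        exact hnot hmemj
  · have hTeven : Even T := hbr.resolve_right hB
    push_neg at hB
    have hall : ∀ t < T, ℓ t = ℓ 0 := by
      intro t
      induction t with
      | zero => intro _; rfl
      | succ t ih =>
        intro ht
        have h1 := hB t (by omega)
        rw [Nat.mod_eq_of_lt ht] at h1
        rw [← h1]
        exact ih (by omega)
    obtain ⟨a, b, hab, hℓ0⟩ := Finset.card_eq_two.mp (hcard 0 hT)
    refine ⟨fun t => if t % 2 = 0 then a else b, ?_, ?_⟩
    · intro t ht
      rw [hall t ht, hℓ0]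
      by_cases h2 : t % 2 = 0 <;> simp [h2]
    · intro t ht
      simp only
      by_cases htT : t + 1 < T
      · rw [Nat.mod_eq_of_lt htT]
        have : (t + 1) % 2 ≠ t % 2 := by omega
        by_cases h2 : t % 2 = 0
        · rw [if_pos h2, if_neg (by omega)]; exact hab
        · rw [if_neg h2, if_pos (by omega)]; exact hab.symm
      · have ht1 : t + 1 = T := by omega
        rw [ht1, Nat.mod_self]
        obtain ⟨u, hu⟩ := hTeven
        have ht2 : t % 2 = 1 := by omega
        rw [if_neg (by omega), if_pos (by simp)]
        exact hab.symm


open List Finset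

def pairsL (l : List ℕ) : List (ℕ × ℕ) := l.zip l.tail

@[simp] lemma pairsL_nil : pairsL [] = [] := rfl
@[simp] lemma pairsL_single (a : ℕ) : pairsL [a] = [] := rfl
@[simp] lemma pairsL_cons_cons (a b : ℕ) (l : List ℕ) :
    pairsL (a :: b :: l) = (a, b) :: pairsL (b :: l) := rfl

lemma pairsL_glue (zs : List ℕ) (a : ℕ) (rest : List ℕ) :
    pairsL (zs ++ a :: rest) = pairsL (zs ++ [a]) ++ pairsL (a :: rest) := by
  induction zs with
  | nil => simp
  | cons z zs ih =>
    cases zs with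
    | nil =>
      cases rest with
      | nil => simp
      | cons b rest' => simp [pairsL_cons_cons]
    | cons z' zs' =>
      have h1 : (z :: z' :: zs') ++ a :: rest = z :: z' :: (zs' ++ a :: rest) := by simp
      have h2 : (z :: z' :: zs') ++ [a] = z :: z' :: (zs' ++ [a]) := by simp
      rw [h1, h2]
      cases zs' with
      | nil =>
        simp [pairsL_cons_cons]
      | cons z'' zs'' =>
        have e1 : z' :: (z'' :: zs'' ++ a :: rest) = (z' :: z'' :: zs'') ++ a :: rest := by simp
        have e2 : z' :: (z'' :: zs'' ++ [a]) = (z' :: z'' :: zs'') ++ [a] := by simp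
        rw [pairsL_cons_cons, pairsL_cons_cons, e1, e2, ih]
        simp

lemma pairsL_length (l : List ℕ) : (pairsL l).length = l.length - 1 := by
  simp [pairsL, List.length_zip, List.length_tail]

lemma pairsL_getElem (l : List ℕ) (i : ℕ) (h : i < (pairsL l).length) :
    (pairsL l)[i] = (l.getD i 0, l.getD (i+1) 0) := by
  have hl : i + 1 < l.length := by
    have := pairsL_length l
    omega
  have h1 : i < l.tail.length := by simp [List.length_tail]; omega
  rw [show (pairsL l)[i] = (l.zip l.tail)[i]'(by simp only [List.length_zip, List.length_tail]; omega) from rfl, List.getElem_zip]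
  rw [List.getElem_tail]
  rw [List.getD_eq_getElem l 0 (by omega), List.getD_eq_getElem l 0 hl]

/-- The zig-zag trail through `A = 2k+1` and `B = 2k+2`, as edge list building block. -/
def ntAux (A B : ℕ) : ℕ → List ℕ
  | 0 => []
  | j+1 => ntAux A B j ++ [2*j, A, 2*j+1, B]

def newTrail (k : ℕ) : List ℕ :=
  ntAux (2*k+1) (2*k+2) k ++ [2*k, 2*k+1, 2*k+2, 0]

def tour : ℕ → List ℕ
  | 0 => [0]
  | k+1 => (tour k).dropLast ++ newTrail k

@[simp] lemma ntAux_length (A B j : ℕ) : (ntAux A B j).length = 4*j := by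
  induction j with
  | zero => rfl
  | succ j ih => simp [ntAux, ih]; omega

lemma newTrail_length (k : ℕ) : (newTrail k).length = 4*k+4 := by
  simp [newTrail]

lemma tour_length (k : ℕ) : (tour k).length = k * (2*k+1) + 1 := by
  induction k with
  | zero => rfl
  | succ k ih =>
    simp [tour, newTrail_length, List.length_dropLast, ih]
    ring

/-- edge list of the zigzag block -/
def Q (A B : ℕ) : ℕ → List (ℕ × ℕ)
  | 0 => []
  | j+1 => Q A B j ++ [(2*j, A), (A, 2*j+1), (2*j+1, B), (B, 2*j+2)]

lemma pairsL_ntAux (A B j : ℕ) :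
    pairsL (ntAux A B j ++ [2*j]) = Q A B j := by
  induction j with
  | zero => simp [ntAux, Q]
  | succ j ih =>
    have h1 : ntAux A B (j+1) ++ [2*(j+1)] =
        ntAux A B j ++ (2*j) :: [A, 2*j+1, B, 2*(j+1)] := by
      simp [ntAux]
    rw [h1, pairsL_glue, ih]
    simp [Q]
    omega

lemma pairsL_newTrail (k : ℕ) :
    pairsL (newTrail k) = Q (2*k+1) (2*k+2) k ++ [(2*k, 2*k+1), (2*k+1, 2*k+2), (2*k+2, 0)] := by
  have h1 : newTrail k = ntAux (2*k+1) (2*k+2) k ++ (2*k) :: [2*k+1, 2*k+2, 0] := by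
    simp [newTrail]
  rw [h1, pairsL_glue, pairsL_ntAux]
  simp [pairsL_cons_cons]

lemma mem_Q {A B j : ℕ} (hA : 2*j < A) (hB : 2*j < B) (hAB : A ≠ B) :
    ∀ p ∈ Q A B j, p.1 ≠ p.2 ∧ (p.1 < 2*j ∨ p.1 = A ∨ p.1 = B) ∧ (p.2 ≤ 2*j ∨ p.2 = A ∨ p.2 = B) := by
  induction j with
  | zero => simp [Q]
  | succ j ih =>
    intro p hp
    simp only [Q, List.mem_append, List.mem_cons, List.mem_singleton] at hp
    rcases hp with hp | hp
    · have := ih (by omega) (by omega) p hp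
      omega
    · simp at hp
      rcases hp with rfl | rfl | rfl | rfl <;> simp <;> omega

lemma Q_cover {A B j : ℕ} :
    ∀ i < j, (2*i, A) ∈ Q A B j ∧ (A, 2*i+1) ∈ Q A B j ∧ (2*i+1, B) ∈ Q A B j ∧
      (B, 2*i+2) ∈ Q A B j := by
  induction j with
  | zero => omega
  | succ j ih =>
    intro i hi
    rcases Nat.lt_or_ge i j with h | h
    · have := ih i h
      simp only [Q, List.mem_append]
      exact ⟨Or.inl this.1, Or.inl this.2.1, Or.inl this.2.2.1, Or.inl this.2.2.2⟩
    · have hij : i = j := by omega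
      subst hij
      simp [Q]

lemma mem_newTrail_pairs {k : ℕ} :
    ∀ p ∈ pairsL (newTrail k), p.1 ≠ p.2 ∧ p.1 < 2*k+3 ∧ p.2 < 2*k+3 := by
  intro p hp
  rw [pairsL_newTrail] at hp
  simp only [List.mem_append, List.mem_cons, List.mem_singleton] at hp
  rcases hp with hp | hp
  · have := mem_Q (by omega) (by omega) (by omega) p hp
    omega
  · simp at hp
    rcases hp with rfl | rfl | rfl <;> simp <;> omega

lemma newTrail_cover {k : ℕ} :
    (∀ x < 2*k+1, ((x, 2*k+1) ∈ pairsL (newTrail k) ∨ (2*k+1, x) ∈ pairsL (newTrail k)) ∧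
      ((x, 2*k+2) ∈ pairsL (newTrail k) ∨ (2*k+2, x) ∈ pairsL (newTrail k))) ∧
      (2*k+1, 2*k+2) ∈ pairsL (newTrail k) := by
  have hQ : ∀ p ∈ Q (2*k+1) (2*k+2) k, p ∈ pairsL (newTrail k) := by
    intro p hp; rw [pairsL_newTrail]; exact List.mem_append_left _ hp
  have hEx : ∀ p ∈ [(2*k, 2*k+1), (2*k+1, 2*k+2), (2*k+2, 0)], p ∈ pairsL (newTrail k) := by
    intro p hp; rw [pairsL_newTrail]; exact List.mem_append_right _ hp
  refine ⟨?_, hEx _ (by simp)⟩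
  intro x hx
  constructor
  · rcases Nat.even_or_odd x with ⟨i, hi⟩ | ⟨i, hi⟩
    · by_cases hik : i < k
      · have hx2 : x = 2*i := by omega
        rw [hx2]
        exact Or.inl (hQ _ (Q_cover i hik).1)
      · have hx2 : x = 2*k := by omega
        rw [hx2]
        exact Or.inl (hEx _ (by simp))
    · have hx2 : x = 2*i+1 := by omega
      rw [hx2]
      exact Or.inr (hQ _ (Q_cover i (by omega)).2.1)
  · rcases Nat.even_or_odd x with ⟨i, hi⟩ | ⟨i, hi⟩
    · by_cases hi0 : i = 0
      · have hx2 : x = 0 := by omega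
        rw [hx2]
        exact Or.inr (hEx _ (by simp))
      · have hx2 : x = 2*(i-1)+2 := by omega
        rw [hx2]
        exact Or.inr (hQ _ (Q_cover (i-1) (by omega)).2.2.2)
    · have hx2 : x = 2*i+1 := by omega
      rw [hx2]
      exact Or.inl (hQ _ (Q_cover i (by omega)).2.2.1)

lemma ntAux_head (A B j : ℕ) (hj : 1 ≤ j) : ∃ rest, ntAux A B j = 0 :: rest := by
  induction j with
  | zero => omega
  | succ j ih =>
    rcases Nat.eq_zero_or_pos j with rfl | hj'
    · exact ⟨[A, 2*0+1, B], by simp [ntAux]⟩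
    · obtain ⟨rest, hrest⟩ := ih hj'
      exact ⟨rest ++ [2*j, A, 2*j+1, B], by simp [ntAux, hrest]⟩

lemma newTrail_head (k : ℕ) : ∃ rest, newTrail k = 0 :: rest := by
  rcases Nat.eq_zero_or_pos k with rfl | hk
  · exact ⟨[1, 2, 0], rfl⟩
  · obtain ⟨rest, hrest⟩ := ntAux_head (2*k+1) (2*k+2) k hk
    exact ⟨rest ++ [2*k, 2*k+1, 2*k+2, 0], by simp [newTrail, hrest]⟩

lemma tour_last (k : ℕ) : tour k = (tour k).dropLast ++ [0] := by
  induction k with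
  | zero => rfl
  | succ k ih =>
    have h1 : newTrail k = (ntAux (2*k+1) (2*k+2) k ++ [2*k, 2*k+1, 2*k+2]) ++ [0] := by
      simp [newTrail]
    have h2 : tour (k+1) = ((tour k).dropLast ++ (ntAux (2*k+1) (2*k+2) k ++ [2*k, 2*k+1, 2*k+2])) ++ [0] := by
      show (tour k).dropLast ++ newTrail k = _
      rw [h1, ← List.append_assoc]
    rw [h2, List.dropLast_concat]

lemma pairsL_tour_succ (k : ℕ) :
    pairsL (tour (k+1)) = pairsL (tour k) ++ pairsL (newTrail k) := by
  obtain ⟨rest, hrest⟩ := newTrail_head k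
  have h1 : tour (k+1) = (tour k).dropLast ++ 0 :: rest := by
    show (tour k).dropLast ++ newTrail k = _
    rw [hrest]
  rw [h1, pairsL_glue, ← hrest]
  congr 1
  rw [← tour_last k]

lemma mem_tour_pairs {k : ℕ} :
    ∀ p ∈ pairsL (tour k), p.1 ≠ p.2 ∧ p.1 < 2*k+1 ∧ p.2 < 2*k+1 := by
  induction k with
  | zero => simp [tour]
  | succ k ih =>
    intro p hp
    rw [pairsL_tour_succ] at hp
    rcases List.mem_append.mp hp with hp | hp
    · have := ih p hp
      omega
    · have := mem_newTrail_pairs p hp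
      omega

lemma tour_cover {k : ℕ} :
    ∀ a b, a < b → b < 2*k+1 → (a, b) ∈ pairsL (tour k) ∨ (b, a) ∈ pairsL (tour k) := by
  induction k with
  | zero => omega
  | succ k ih =>
    intro a b hab hb
    rw [pairsL_tour_succ]
    by_cases hbk : b < 2*k+1
    · rcases ih a b hab hbk with h | h
      · exact Or.inl (List.mem_append_left _ h)
      · exact Or.inr (List.mem_append_left _ h)
    · -- b = 2k+1 or 2k+2
      have hcov := newTrail_cover (k := k)
      rcases (by omega : b = 2*k+1 ∨ b = 2*k+2) with rfl | rfl
      · rcases (hcov.1 a (by omega)).1 with h | h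
        · exact Or.inl (List.mem_append_right _ h)
        · exact Or.inr (List.mem_append_right _ h)
      · by_cases ha : a < 2*k+1
        · rcases (hcov.1 a (by omega)).2 with h | h
          · exact Or.inl (List.mem_append_right _ h)
          · exact Or.inr (List.mem_append_right _ h)
        · have : a = 2*k+1 := by omega
          subst this
          exact Or.inl (List.mem_append_right _ hcov.2)

lemma ntAux_count {A B j : ℕ} (hA : 2*j < A) (hB : 2*j < B) (hAB : A ≠ B) (v : ℕ) :
    (ntAux A B j).count v =
      if v = A ∨ v = B then j else if v < 2*j then 1 else 0 := by
  induction j with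
  | zero => simp [ntAux]
  | succ j ih =>
    have h := ih (by omega) (by omega)
    simp only [ntAux, List.count_append]
    rw [h]
    simp only [List.count_cons, List.count_nil, beq_iff_eq]
    split_ifs <;> omega

lemma tour_count {k : ℕ} (v : ℕ) :
    ((tour k).dropLast).count v = if v < 2*k+1 then k else 0 := by
  induction k with
  | zero => simp [tour]
  | succ k ih =>
    have hsplit : (tour (k+1)).dropLast = (tour k).dropLast ++ (newTrail k).dropLast := by
      show ((tour k).dropLast ++ newTrail k).dropLast = _
      rw [List.dropLast_append_of_ne_nil]
      obtain ⟨rest, hrest⟩ := newTrail_head k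
      rw [hrest]; simp
    have hnd : (newTrail k).dropLast = ntAux (2*k+1) (2*k+2) k ++ [2*k, 2*k+1, 2*k+2] := by
      have h1 : newTrail k = (ntAux (2*k+1) (2*k+2) k ++ [2*k, 2*k+1, 2*k+2]) ++ [0] := by
        simp [newTrail]
      rw [h1, List.dropLast_concat]
    rw [hsplit, List.count_append, ih, hnd, List.count_append,
      ntAux_count (by omega) (by omega) (by omega)]
    simp only [List.count_cons, List.count_nil, beq_iff_eq]
    split_ifs <;> omega

lemma tour_getD_zero (k : ℕ) : (tour k).getD 0 0 = 0 := by
  induction k with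
  | zero => rfl
  | succ k ih =>
    show ((tour k).dropLast ++ newTrail k).getD 0 0 = 0
    rcases Nat.eq_zero_or_pos k with rfl | hk
    · rfl
    · have hlen : 0 < (tour k).dropLast.length := by
        rw [List.length_dropLast, tour_length]
        have : 1 ≤ k * (2*k+1) := Nat.one_le_iff_ne_zero.mpr (by positivity)
        omega
      rw [List.getD_append _ _ _ _ hlen]
      rw [List.getD_eq_getElem _ _ hlen, List.getElem_dropLast,
        ← List.getD_eq_getElem _ 0 (by rw [tour_length]; omega)]
      exact ih

lemma tour_getD_one (k : ℕ) (hk : 1 ≤ k) : (tour k).getD 1 0 = 1 := by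
  induction k with
  | zero => omega
  | succ k ih =>
    show ((tour k).dropLast ++ newTrail k).getD 1 0 = 1
    rcases Nat.eq_zero_or_pos k with rfl | hk'
    · rfl
    · have h3 : 1*3 ≤ k * (2*k+1) := Nat.mul_le_mul hk' (by omega)
      have hlen : 1 < (tour k).dropLast.length := by
        rw [List.length_dropLast, tour_length]
        omega
      rw [List.getD_append _ _ _ _ hlen]
      rw [List.getD_eq_getElem _ _ hlen, List.getElem_dropLast,
        ← List.getD_eq_getElem _ 0 (by rw [tour_length]; omega)]
      exact ih hk'

lemma tour_getD_last (k : ℕ) : (tour k).getD (k * (2*k+1)) 0 = 0 := by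
  have h1 := tour_last k
  have hlen : (tour k).dropLast.length = k * (2*k+1) := by
    rw [List.length_dropLast, tour_length]
    omega
  conv_lhs => rw [h1]
  rw [List.getD_append_right _ _ _ _ (by omega), hlen]
  simp

lemma tour_getD_secondlast (k : ℕ) (hk : 1 ≤ k) :
    (tour k).getD (k * (2*k+1) - 1) 0 = 2*k := by
  induction k with
  | zero => omega
  | succ k ih =>
    show ((tour k).dropLast ++ newTrail k).getD ((k+1) * (2*(k+1)+1) - 1) 0 = 2*(k+1)
    have hlen : (tour k).dropLast.length = k * (2*k+1) := by
      rw [List.length_dropLast, tour_length]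
      omega
    have hidx : (k+1) * (2*(k+1)+1) - 1 = k * (2*k+1) + (4*k + 2) := by ring_nf; omega
    rw [hidx, List.getD_append_right _ _ _ _ (by omega), hlen]
    have : k * (2*k+1) + (4*k+2) - k * (2*k+1) = 4*k+2 := by omega
    rw [this]
    have hnt : newTrail k = ntAux (2*k+1) (2*k+2) k ++ [2*k, 2*k+1, 2*k+2, 0] := rfl
    rw [hnt, List.getD_append_right _ _ _ _ (by rw [ntAux_length]; omega), ntAux_length]
    have : 4*k+2 - 4*k = 2 := by omega
    rw [this]
    simp only [List.getD_cons_succ, List.getD_cons_zero]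
    omega

lemma count_getD (l : List ℕ) (v : ℕ) :
    ((Finset.range l.length).filter (fun i => l.getD i 0 = v)).card = l.count v := by
  induction l with
  | nil => simp
  | cons x xs ih =>
    rw [Finset.card_filter, List.length_cons, Finset.sum_range_succ']
    rw [Finset.card_filter] at ih
    simp only [List.getD_cons_succ, List.getD_cons_zero, List.count_cons, beq_iff_eq]
    rw [ih]

lemma tour_spec (k : ℕ) (hk : 1 ≤ k) :
    ∃ w : ℕ → ℕ,
      (∀ t, w (t % (k*(2*k+1))) = w t) ∧
      (∀ t < k*(2*k+1), w t < 2*k+1) ∧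
      (∀ t < k*(2*k+1), w t ≠ w (t+1)) ∧
      (∀ a b, a < b → b < 2*k+1 →
        ∃ t, t < k*(2*k+1) ∧ ((w t = a ∧ w (t+1) = b) ∨ (w t = b ∧ w (t+1) = a))) ∧
      (∀ v, ((Finset.range (k*(2*k+1))).filter (fun t => w t = v)).card ≤ k) ∧
      w 0 = 0 ∧ w 1 = 1 ∧ w (k*(2*k+1) - 1) = 2*k := by
  set T := k*(2*k+1) with hTdef
  set l := tour k with hldef
  have hT3 : 1*3 ≤ T := Nat.mul_le_mul hk (by omega)
  have hT : 0 < T := by omega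
  have hlen : l.length = T + 1 := tour_length k
  set w : ℕ → ℕ := fun t => l.getD (t % T) 0 with hwdef
  have hmod : ∀ t, w (t % T) = w t := by
    intro t
    show l.getD (t % T % T) 0 = l.getD (t % T) 0
    rw [Nat.mod_mod_of_dvd _ dvd_rfl]
  have hw : ∀ t, t < T → w t = l.getD t 0 := by
    intro t ht
    show l.getD (t % T) 0 = l.getD t 0
    rw [Nat.mod_eq_of_lt ht]
  have hw1 : ∀ t, t < T → w (t+1) = l.getD (t+1) 0 := by
    intro t ht
    rcases Nat.lt_or_ge (t+1) T with h | h
    · exact hw _ h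
    · have ht1 : t + 1 = T := by omega
      show l.getD ((t+1) % T) 0 = l.getD (t+1) 0
      rw [ht1, Nat.mod_self, hTdef]
      rw [tour_getD_last k, tour_getD_zero k]
  have hplen : (pairsL l).length = T := by
    rw [pairsL_length, hlen]
    omega
  have hpair : ∀ t, t < T → (l.getD t 0, l.getD (t+1) 0) ∈ pairsL l := by
    intro t ht
    have h1 : (pairsL l)[t]'(by omega) = (l.getD t 0, l.getD (t+1) 0) :=
      pairsL_getElem l t (by omega)
    rw [← h1]
    exact List.getElem_mem _
  refine ⟨w, hmod, ?_, ?_, ?_, ?_, ?_, ?_, ?_⟩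
  · intro t ht
    have := mem_tour_pairs _ (hpair t ht)
    rw [hw t ht]
    exact this.2.1
  · intro t ht
    have := mem_tour_pairs _ (hpair t ht)
    rw [hw t ht, hw1 t ht]
    exact this.1
  · intro a b hab hb
    rcases tour_cover a b hab hb with h | h
    · obtain ⟨t, hlt, heq⟩ := List.mem_iff_getElem.mp h
      rw [hplen] at hlt
      rw [pairsL_getElem l t (by omega)] at heq
      refine ⟨t, hlt, Or.inl ?_⟩
      rw [hw t hlt, hw1 t hlt]
      exact ⟨(Prod.ext_iff.mp heq).1, (Prod.ext_iff.mp heq).2⟩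
    · obtain ⟨t, hlt, heq⟩ := List.mem_iff_getElem.mp h
      rw [hplen] at hlt
      rw [pairsL_getElem l t (by omega)] at heq
      refine ⟨t, hlt, Or.inr ?_⟩
      rw [hw t hlt, hw1 t hlt]
      exact ⟨(Prod.ext_iff.mp heq).1, (Prod.ext_iff.mp heq).2⟩
  · intro v
    have hdl : l.dropLast.length = T := by
      rw [List.length_dropLast, hlen]
      omega
    have hcongr : ((Finset.range T).filter (fun t => w t = v)).card
        = ((Finset.range (l.dropLast.length)).filter (fun i => l.dropLast.getD i 0 = v)).card := by
      rw [hdl]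
      apply Finset.card_bij (fun t _ => t)
      · intro t ht
        simp only [Finset.mem_filter, Finset.mem_range] at ht ⊢
        refine ⟨ht.1, ?_⟩
        rw [List.getD_eq_getElem _ _ (by omega), List.getElem_dropLast,
          ← List.getD_eq_getElem _ 0 (by omega), ← hw t ht.1]
        exact ht.2
      · intro a b _ _ h; exact h
      · intro b hb
        simp only [Finset.mem_filter, Finset.mem_range] at hb ⊢
        refine ⟨b, ⟨hb.1, ?_⟩, rfl⟩
        rw [hw b hb.1, List.getD_eq_getElem _ 0 (by omega)]
        rw [List.getD_eq_getElem _ _ (by omega), List.getElem_dropLast] at hb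
        exact hb.2
    rw [hcongr, count_getD]
    rw [hldef] at *
    rw [tour_count v]
    split_ifs <;> omega
  · rw [hw 0 hT]; exact tour_getD_zero k
  · rw [hw 1 (by omega)]; exact tour_getD_one k hk
  · rw [hw (T-1) (by omega)]; exact tour_getD_secondlast k hk



open Finset

lemma not_mem_LSet (r : ℕ) (hr : 0 < r) :
    ((if Even r then 2*r - 1 else 2*r) - 1) ∉ LSet (starGraph r) 2 := by
  classical
  intro hmem
  set m := (if Even r then 2*r - 1 else 2*r) - 1 with hmdef
  obtain ⟨L, hLcard, hLforce⟩ := hmem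
  have hmval : (Even r ∧ m = 2*r - 2) ∨ (¬ Even r ∧ m = 2*r - 1) := by
    by_cases he : Even r
    · left; refine ⟨he, ?_⟩; rw [hmdef, if_pos he]; omega
    · right; refine ⟨he, ?_⟩; rw [hmdef, if_neg he]
  by_cases hsmall : m < r + 1
  · set c : Sym2 (Fin m) → ℕ := fun e => if h : (L e).Nonempty then h.choose else 0 with hc
    have hforce := hLforce c ?_
    · obtain ⟨f, x, hinj, -⟩ := hforce
      have hcard := Fintype.card_le_of_injective f hinj
      simp only [Fintype.card_fin] at hcard
      omega
    · intro e he
      have h2 : (L e).Nonempty := Finset.card_pos.mp (by rw [hLcard e he]; omega)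
      rw [hc]
      simp only [dif_pos h2]
      exact h2.choose_spec
  -- main case
  have hr2 : 2 ≤ r := by
    rcases hmval with ⟨_, hm⟩ | ⟨_, hm⟩ <;> omega
  set k := r - 1 with hkdef
  have hk1 : 1 ≤ k := by omega
  have hm3 : 3 ≤ m := by omega
  have hmk : (m = 2*k ∧ Even r) ∨ m = 2*k+1 := by
    rcases hmval with ⟨he, hm⟩ | ⟨he, hm⟩
    · left; exact ⟨by omega, he⟩
    · right; omega
  have hmn : m ≤ 2*k+1 := by omega
  obtain ⟨w, hmod, hwlt, hwne, hcov, hcnt, hw0, hw1, hwlast⟩ := tour_spec k hk1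
  set T := k*(2*k+1) with hTdef
  have hT3 : 1*3 ≤ T := Nat.mul_le_mul hk1 (by omega)
  have hT : 0 < T := by omega
  have hwT : w T = 0 := by
    have h1 := hmod T
    rw [Nat.mod_self] at h1
    rw [← h1, hw0]
  -- fresh colour threshold
  set M := 1 + Finset.univ.sup (fun e : Sym2 (Fin m) => (L e).sup id) with hMdef
  have hM : ∀ (e : Sym2 (Fin m)), ∀ a ∈ L e, a < M := by
    intro e a ha
    have h1 : (L e).sup id ≤ Finset.univ.sup (fun e : Sym2 (Fin m) => (L e).sup id) :=
      Finset.le_sup (f := fun e : Sym2 (Fin m) => (L e).sup id) (Finset.mem_univ e)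
    have h2 : a ≤ (L e).sup id := Finset.le_sup (f := id) ha
    omega
  -- the lists along the tour
  set ℓ : ℕ → Finset ℕ := fun t =>
    if h : w t < m ∧ w (t+1) < m then L s(⟨w t, h.1⟩, ⟨w (t+1), h.2⟩)
    else {M + 2 * min (w t) (w (t+1)), M + 2 * min (w t) (w (t+1)) + 1} with hℓdef
  have hℓcard : ∀ t < T, (ℓ t).card = 2 := by
    intro t ht
    rw [hℓdef]
    simp only
    by_cases h : w t < m ∧ w (t+1) < m
    · rw [dif_pos h]
      apply hLcard
      rw [Sym2.mk_isDiag_iff]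
      intro hd
      exact hwne t ht (by simpa [Fin.ext_iff] using hd)
    · rw [dif_neg h]
      exact Finset.card_pair (by omega)
  have hbr : Even T ∨ ∃ t₀, t₀ < T ∧ ℓ t₀ ≠ ℓ ((t₀ + 1) % T) := by
    rcases hmk with ⟨hm2k, he⟩ | hm2k1
    · right
      refine ⟨T - 1, by omega, ?_⟩
      have hTm : (T - 1 + 1) % T = 0 := by
        have : T - 1 + 1 = T := by omega
        rw [this, Nat.mod_self]
      rw [hTm]
      have hwT1 : w (T - 1) = 2*k := by
        rw [← hwlast]
      have hwT1' : w (T - 1 + 1) = 0 := by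
        have : T - 1 + 1 = T := by omega
        rw [this, hwT]
      have hfresh : ¬ (w (T-1) < m ∧ w (T-1+1) < m) := by
        rw [hwT1, hm2k]
        omega
      have hreal : w 0 < m ∧ w (0+1) < m := by
        rw [hw0]; simp only [Nat.zero_add]; rw [hw1]; omega
      rw [hℓdef]
      simp only
      rw [dif_neg hfresh, dif_pos hreal]
      intro heq
      have hMmem : M + 2 * min (w (T-1)) (w (T-1+1)) ∈
          ({M + 2 * min (w (T-1)) (w (T-1+1)), M + 2 * min (w (T-1)) (w (T-1+1)) + 1} : Finset ℕ) := by
        simp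
      rw [heq] at hMmem
      have := hM _ _ hMmem
      rw [hwT1, hwT1'] at this
      simp at this
    · left
      have hkeven : Even k := by
        rcases hmval with ⟨he, hm⟩ | ⟨he, hm⟩
        · omega
        · rcases Nat.odd_iff.mp (Nat.not_even_iff_odd.mp he) with h1
          refine Nat.even_iff.mpr ?_
          omega
      exact hkeven.mul_right _
  obtain ⟨g, hgmem, hgne⟩ := cyclic_list_coloring T ℓ hℓcard hbr
  -- the colouring of K_m
  set c : Sym2 (Fin m) → ℕ := fun e =>
    if h : ∃ t, t < T ∧ Sym2.map Fin.val e = s(w t, w (t+1)) then g h.choose else 0 with hcdef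
  have hex : ∀ e : Sym2 (Fin m), ¬ e.IsDiag →
      ∃ t, t < T ∧ Sym2.map Fin.val e = s(w t, w (t+1)) := by
    intro e he
    induction e using Sym2.inductionOn with
    | hf a b =>
      rw [Sym2.mk_isDiag_iff] at he
      have hvne : (a : ℕ) ≠ b := fun h => he (Fin.ext h)
      rcases Nat.lt_or_ge a.val b.val with hab | hab
      · obtain ⟨t, ht, hor⟩ := hcov a.val b.val hab (by have := b.isLt; omega)
        refine ⟨t, ht, ?_⟩
        rw [Sym2.map_pair_eq]
        rcases hor with ⟨h1, h2⟩ | ⟨h1, h2⟩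
        · rw [h1, h2]
        · rw [h1, h2, Sym2.eq_swap]
      · have hba : (b : ℕ) < a := by omega
        obtain ⟨t, ht, hor⟩ := hcov b.val a.val hba (by have := a.isLt; omega)
        refine ⟨t, ht, ?_⟩
        rw [Sym2.map_pair_eq]
        rcases hor with ⟨h1, h2⟩ | ⟨h1, h2⟩
        · rw [h1, h2, Sym2.eq_swap]
        · rw [h1, h2]
  have hcspec : ∀ (e : Sym2 (Fin m)) (he : ¬ e.IsDiag),
      c e = g (hex e he).choose := by
    intro e he
    rw [hcdef]
    simp only
    rw [dif_pos (hex e he)]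
  -- c e ∈ L e on non-diagonal edges
  have hcL : ∀ e : Sym2 (Fin m), ¬ e.IsDiag → c e ∈ L e := by
    intro e he
    obtain ⟨ht, hmap⟩ := (hex e he).choose_spec
    set t := (hex e he).choose with htdef
    rw [hcspec e he]
    -- identify ℓ t with L e
    have hbmem : ∀ x ∈ Sym2.map Fin.val e, x < m := by
      intro x hx
      rw [Sym2.mem_map] at hx
      obtain ⟨y, -, hy⟩ := hx
      rw [← hy]
      exact y.isLt
    have hwtm : w t < m ∧ w (t+1) < m := by
      constructor
      · exact hbmem _ (by rw [hmap]; exact Sym2.mem_mk_left _ _)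
      · exact hbmem _ (by rw [hmap]; exact Sym2.mem_mk_right _ _)
    have hℓt : ℓ t = L e := by
      rw [hℓdef]
      simp only
      rw [dif_pos hwtm]
      congr 1
      apply Sym2.map.injective (Fin.val_injective)
      rw [Sym2.map_pair_eq, ← hmap]
    rw [← hℓt]
    exact hgmem t ht
  -- get the forced monochromatic star and derive a contradiction
  have hforce := hLforce c hcL
  obtain ⟨v, x, hvx⟩ := degree_of_mono hforce
  -- injection from the star's leaves into the times visiting v
  set S := univ.filter (fun u => u ≠ v ∧ c s(v, u) = x) with hSdef
  have hnd : ∀ u : Fin m, u ≠ v → ¬ (s(v, u) : Sym2 (Fin m)).IsDiag := by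
    intro u hu
    rw [Sym2.mk_isDiag_iff]
    exact fun h => hu h.symm
  set tf : (u : Fin m) → u ≠ v → ℕ := fun u hu => (hex s(v, u) (hnd u hu)).choose with htfdef
  have htf : ∀ (u : Fin m) (hu : u ≠ v), tf u hu < T ∧
      ((w (tf u hu) = v.val ∧ w (tf u hu + 1) = u.val) ∨
       (w (tf u hu) = u.val ∧ w (tf u hu + 1) = v.val)) := by
    intro u hu
    obtain ⟨ht, hmap⟩ := (hex s(v, u) (hnd u hu)).choose_spec
    simp only [Sym2.map_pair_eq] at hmap
    refine ⟨ht, ?_⟩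
    rcases Sym2.eq_iff.mp hmap with ⟨h1, h2⟩ | ⟨h1, h2⟩
    · exact Or.inl ⟨h1.symm, h2.symm⟩
    · exact Or.inr ⟨h2.symm, h1.symm⟩
  have hgx : ∀ (u : Fin m), u ∈ S → ∀ (hu : u ≠ v), g (tf u hu) = x := by
    intro u huS hu
    rw [hSdef] at huS
    simp only [Finset.mem_filter, Finset.mem_univ, true_and] at huS
    rw [← huS.2, hcspec s(v, u) (hnd u hu)]
  -- define the injection
  classical
  set φ : Fin m → ℕ := fun u =>
    if hu : u ≠ v then (if w (tf u hu) = v.val then tf u hu else (tf u hu + 1) % T) else 0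
    with hφdef
  have hφmem : ∀ u ∈ S, φ u ∈ (Finset.range T).filter (fun t => w t = v.val) := by
    intro u huS
    have huv : u ≠ v := by
      rw [hSdef] at huS
      simp only [Finset.mem_filter, Finset.mem_univ, true_and] at huS
      exact huS.1
    obtain ⟨ht, hor⟩ := htf u huv
    rw [hφdef]
    simp only [dif_pos huv]
    by_cases hcase : w (tf u huv) = v.val
    · rw [if_pos hcase]
      simp only [Finset.mem_filter, Finset.mem_range]
      exact ⟨ht, hcase⟩
    · rw [if_neg hcase]
      have h2 : w (tf u huv + 1) = v.val := by
        rcases hor with ⟨h1, _⟩ | ⟨_, h2⟩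
        · exact absurd h1 hcase
        · exact h2
      simp only [Finset.mem_filter, Finset.mem_range]
      constructor
      · exact Nat.mod_lt _ hT
      · rw [hmod (tf u huv + 1)]
        exact h2
  have hφinj : ∀ u₁ ∈ S, ∀ u₂ ∈ S, φ u₁ = φ u₂ → u₁ = u₂ := by
    intro u₁ h₁ u₂ h₂ hφeq
    have hu₁ : u₁ ≠ v := by
      rw [hSdef] at h₁; simp only [Finset.mem_filter, Finset.mem_univ, true_and] at h₁; exact h₁.1
    have hu₂ : u₂ ≠ v := by
      rw [hSdef] at h₂; simp only [Finset.mem_filter, Finset.mem_univ, true_and] at h₂; exact h₂.1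
    obtain ⟨ht₁, hor₁⟩ := htf u₁ hu₁
    obtain ⟨ht₂, hor₂⟩ := htf u₂ hu₂
    rw [hφdef] at hφeq
    simp only [dif_pos hu₁, dif_pos hu₂] at hφeq
    -- helper : from tf equal conclude u equal
    have hsame : tf u₁ hu₁ = tf u₂ hu₂ → u₁ = u₂ := by
      intro hte
      have hm₁ := (hex s(v, u₁) (hnd u₁ hu₁)).choose_spec.2
      have hm₂ := (hex s(v, u₂) (hnd u₂ hu₂)).choose_spec.2
      rw [show (hex s(v, u₁) (hnd u₁ hu₁)).choose = tf u₁ hu₁ from rfl] at hm₁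
      rw [show (hex s(v, u₂) (hnd u₂ hu₂)).choose = tf u₂ hu₂ from rfl] at hm₂
      rw [hte] at hm₁
      have := hm₁.trans hm₂.symm
      have heq := Sym2.map.injective (Fin.val_injective) this
      rcases Sym2.eq_iff.mp heq with ⟨-, h2⟩ | ⟨h1, h2⟩
      · exact h2
      · exact absurd h1.symm hu₂
    by_cases hc₁ : w (tf u₁ hu₁) = v.val <;> by_cases hc₂ : w (tf u₂ hu₂) = v.val
    · rw [if_pos hc₁, if_pos hc₂] at hφeq
      exact hsame hφeq
    · -- mixed : contradiction with proper colouring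
      rw [if_pos hc₁, if_neg hc₂] at hφeq
      exfalso
      have hg₂ := hgne (tf u₂ hu₂) ht₂
      rw [← hφeq] at hg₂
      have hgx₁ := hgx u₁ h₁ hu₁
      have hgx₂ := hgx u₂ h₂ hu₂
      rw [hgx₁, hgx₂] at hg₂
      exact hg₂ rfl
    · rw [if_neg hc₁, if_pos hc₂] at hφeq
      exfalso
      have hg₁ := hgne (tf u₁ hu₁) ht₁
      rw [hφeq] at hg₁
      have hgx₁ := hgx u₁ h₁ hu₁
      have hgx₂ := hgx u₂ h₂ hu₂
      rw [hgx₁, hgx₂] at hg₁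
      exact hg₁ rfl
    · rw [if_neg hc₁, if_neg hc₂] at hφeq
      have : tf u₁ hu₁ = tf u₂ hu₂ := by
        have e₁ : (tf u₁ hu₁ + 1) % T = if tf u₁ hu₁ + 1 = T then 0 else tf u₁ hu₁ + 1 := by
          split_ifs with h
          · rw [h, Nat.mod_self]
          · exact Nat.mod_eq_of_lt (by omega)
        have e₂ : (tf u₂ hu₂ + 1) % T = if tf u₂ hu₂ + 1 = T then 0 else tf u₂ hu₂ + 1 := by
          split_ifs with h
          · rw [h, Nat.mod_self]
          · exact Nat.mod_eq_of_lt (by omega)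
        rw [e₁, e₂] at hφeq
        split_ifs at hφeq <;> omega
      exact hsame this
  have hle := Finset.card_le_card_of_injOn φ hφmem hφinj
  have hk' := hcnt v.val
  omega


lemma fin2_cases (z : Fin 2) : z = 0 ∨ z = 1 := by
  fin_cases z
  · exact Or.inl rfl
  · exact Or.inr rfl

lemma mem_RSet (r : ℕ) (hr : 0 < r) :
    (if Even r then 2*r - 1 else 2*r) ∈ RSet (starGraph r) 2 := by
  intro c
  apply star_forced hr rfl c 0 1
  intro e _
  exact fin2_cases (c e)

lemma mem_LSet (r : ℕ) (hr : 0 < r) :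
    (if Even r then 2*r - 1 else 2*r) ∈ LSet (starGraph r) 2 := by
  refine ⟨fun _ => ({0, 1} : Finset ℕ), fun e _ => Finset.card_pair (by omega), ?_⟩
  intro c hc
  apply star_forced hr rfl c 0 1
  intro e he
  have := hc e he
  simpa using this

theorem list_ramsey_star_two_colours (r : ℕ) (hr : 0 < r) :
    listRamsey (starGraph r) 2 = ramsey (starGraph r) 2 ∧
    listRamsey (starGraph r) 2 = (if Even r then 2 * r - 1 else 2 * r) := by
  set N := if Even r then 2 * r - 1 else 2 * r with hN
  have hLR : listRamsey (starGraph r) 2 = sInf (LSet (starGraph r) 2) := rfl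
  have hRR : ramsey (starGraph r) 2 = sInf (RSet (starGraph r) 2) := rfl
  have hnotm : ∀ n, n < N → n ∉ LSet (starGraph r) 2 := by
    intro n hn hmem
    exact not_mem_LSet r hr (LSet_mono _ _ hmem (by omega))
  have hLeq : listRamsey (starGraph r) 2 = N := by
    rw [hLR]
    apply _root_.le_antisymm
    · exact Nat.sInf_le (mem_LSet r hr)
    · by_contra hlt
      push_neg at hlt
      have hne : (LSet (starGraph r) 2).Nonempty := ⟨N, mem_LSet r hr⟩
      have := Nat.sInf_mem hne
      exact hnotm _ hlt this
  have hReq : ramsey (starGraph r) 2 = N := by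
    rw [hRR]
    apply _root_.le_antisymm
    · exact Nat.sInf_le (mem_RSet r hr)
    · by_contra hlt
      push_neg at hlt
      have hne : (RSet (starGraph r) 2).Nonempty := ⟨N, mem_RSet r hr⟩
      have hmem := Nat.sInf_mem hne
      exact hnotm _ hlt (RSet_subset_LSet _ (by omega) hmem)
  exact ⟨hLeq.trans hReq.symm, hLeq⟩
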